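/- Let m, n be nonzero real numbers and define x(t) = exp(m·t)·cos(n·t), y(t) = exp(m·t)·sin(n·t), z(t) = exp(-2m·t) for t ∈ ℝ. Then the triple (x, y, z) satisfies the Tzitzeica curve equation W(x',y',z')(t) = α · (W(x,y,z)(t))² for all t ∈ ℝ, with α = -2m(m²+n²) / (n(9m²+n²)). -/

import Mathlib

/-- The Wronskian of three functions `x, y, z : ℝ → ℝ`. -/
noncomputable def W3 (x y z : ℝ → ℝ) (t : ℝ) : ℝ :=
  Matrix.det !![x t, y t, z t;
    deriv x t, deriv y t, deriv z t;
    deriv (deriv x) t, deriv (deriv y) t, deriv (deriv z) t]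

noncomputable def x₁₂ (m n : ℝ) : ℝ → ℝ := fun t => Real.exp (m * t) * Real.cos (n * t)
noncomputable def y₁₂ (m n : ℝ) : ℝ → ℝ := fun t => Real.exp (m * t) * Real.sin (n * t)
noncomputable def z₁₂ (m : ℝ) : ℝ → ℝ := fun t => Real.exp (-2 * m * t)

noncomputable def f12 (m n A B : ℝ) : ℝ → ℝ :=
  fun t => Real.exp (m * t) * (A * Real.cos (n * t) + B * Real.sin (n * t))

lemma hasDerivAt_f12 (m n A B t : ℝ) :
    HasDerivAt (f12 m n A B) (f12 m n (m*A + n*B) (m*B - n*A) t) t := by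
  have he : HasDerivAt (fun t : ℝ => Real.exp (m * t)) (Real.exp (m * t) * m) t := by
    simpa using ((hasDerivAt_id t).const_mul m).exp
  have hc : HasDerivAt (fun t : ℝ => Real.cos (n * t)) (-Real.sin (n * t) * n) t := by
    simpa using ((hasDerivAt_id t).const_mul n).cos
  have hs : HasDerivAt (fun t : ℝ => Real.sin (n * t)) (Real.cos (n * t) * n) t := by
    simpa using ((hasDerivAt_id t).const_mul n).sin
  have := he.mul (((hc.const_mul A)).add (hs.const_mul B))
  exact this.congr_deriv (by simp [f12]; ring)

lemma deriv_f12 (m n A B : ℝ) :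
    deriv (f12 m n A B) = f12 m n (m*A + n*B) (m*B - n*A) := by
  funext t; exact (hasDerivAt_f12 m n A B t).deriv

lemma dz_aux (m c : ℝ) :
    deriv (fun t => c * Real.exp (-2*m*t)) = fun t => (c * (-2*m)) * Real.exp (-2*m*t) := by
  funext t
  have h := ((hasDerivAt_id t).const_mul (-2*m)).exp
  have h2 : HasDerivAt (fun t : ℝ => Real.exp (-2*m*t)) ((-2*m) * Real.exp (-2*m*t)) t := by
    exact h.congr_deriv (by show Real.exp (-2*m*t) * (-2*m*1) = _; ring)
  have h3 := h2.const_mul c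
  simpa [mul_assoc] using h3.deriv

lemma deriv_z12 (m : ℝ) : deriv (z₁₂ m) = fun t => (-2*m) * Real.exp (-2*m*t) := by
  have : z₁₂ m = fun t => (1:ℝ) * Real.exp (-2*m*t) := by funext t; simp [z₁₂]
  rw [this, dz_aux]; funext t; ring_nf

lemma hx12 (m n : ℝ) : x₁₂ m n = f12 m n 1 0 := by funext t; simp [x₁₂, f12]
lemma hy12 (m n : ℝ) : y₁₂ m n = f12 m n 0 1 := by funext t; simp [y₁₂, f12]

lemma key_exp (m t : ℝ) : Real.exp (m*t) * Real.exp (m*t) * Real.exp (-2*m*t) = 1 := by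
  rw [← Real.exp_add, ← Real.exp_add, show m*t + m*t + -2*m*t = 0 by ring, Real.exp_zero]

lemma W0_val (m n : ℝ) (t : ℝ) :
    W3 (x₁₂ m n) (y₁₂ m n) (z₁₂ m) t = n * (9*m^2 + n^2) := by
  have h1 := Real.sin_sq_add_cos_sq (n*t)
  have h2 := key_exp m t
  rw [W3, hx12, hy12, Matrix.det_fin_three]
  simp only [deriv_f12, deriv_z12, dz_aux, z₁₂, f12]
  norm_num [Matrix.cons_val_zero, Matrix.cons_val_one, Matrix.head_cons,
    Matrix.cons_val_two, Matrix.tail_cons, Matrix.head_fin_const]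
  have h2' : Real.exp (m*t) * Real.exp (m*t) * Real.exp (-(2*m*t)) = 1 := by
    rw [show -(2*m*t) = -2*m*t by ring]; exact h2
  linear_combination (n*(9*m^2+n^2) * (Real.exp (m*t)*Real.exp (m*t)*Real.exp (-(2*m*t)))) * h1
    + (n*(9*m^2+n^2)) * h2'

lemma W1_val (m n : ℝ) (t : ℝ) :
    W3 (deriv (x₁₂ m n)) (deriv (y₁₂ m n)) (deriv (z₁₂ m)) t
      = (-(2*m) * (m^2 + n^2)) * (n * (9*m^2 + n^2)) := by
  have h1 := Real.sin_sq_add_cos_sq (n*t)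
  have h2 := key_exp m t
  rw [W3, hx12, hy12, Matrix.det_fin_three]
  simp only [deriv_f12, deriv_z12, dz_aux, z₁₂, f12]
  norm_num [Matrix.cons_val_zero, Matrix.cons_val_one, Matrix.head_cons,
    Matrix.cons_val_two, Matrix.tail_cons, Matrix.head_fin_const]
  have h2' : Real.exp (m*t) * Real.exp (m*t) * Real.exp (-(2*m*t)) = 1 := by
    rw [show -(2*m*t) = -2*m*t by ring]; exact h2
  linear_combination ((-(2*m) * (m^2+n^2)) * (n*(9*m^2+n^2))
      * (Real.exp (m*t)*Real.exp (m*t)*Real.exp (-(2*m*t)))) * h1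
    + ((-(2*m) * (m^2+n^2)) * (n*(9*m^2+n^2))) * h2'

theorem stmt_12 (m n : ℝ) (hm : m ≠ 0) (hn : n ≠ 0) :
    ∀ t : ℝ, W3 (deriv (x₁₂ m n)) (deriv (y₁₂ m n)) (deriv (z₁₂ m)) t
      = (-(2 * m * (m ^ 2 + n ^ 2)) / (n * (9 * m ^ 2 + n ^ 2)))
        * (W3 (x₁₂ m n) (y₁₂ m n) (z₁₂ m) t) ^ 2 := by
  intro t
  rw [W1_val, W0_val]
  have h9 : 9 * m ^ 2 + n ^ 2 ≠ 0 := by positivity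
  field_simp
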